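/- Let T be a bounded operator on ℓ-space of edges of the one-ray weighted graph, with matrix (relative to the natural edge basis f₁, f₂, f₃, …) given by the infinite tridiagonal-type matrix with 1 on the diagonal, entries a = -(q-1)u and b = -u on specified sub/super-diagonals, and a+b on certain entries as in the paper. Then the finite principal-minor determinants D_n of I - uT restricted to the first 2n edges satisfy the recursion whose limit is det(I - uT) = (1 - (qk - k + 1)u²)/(1 - qu²); equivalently, the sequence of determinants of the truncations converges to (1 - (qk-k+1)u²)/(1 - qu²) when |qu²| < 1. -/

import Mathlib

/-- The `i,j` entry (0-indexed) of the infinite matrix `I - uT` for the one-ray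
weighted graph with base group of order `k`: `1` on the diagonal, `-(k-1)u` at
`(0,1)`, `a = -(q-1)u` on the subdiagonal entries `(2m+1, 2m)`, `a + b` at the
entries `(2m+1, 2m+3)`, and `b = -u` at the entries `(2m+2, 2m)`. -/
noncomputable def oneRayEntry (q k : ℕ) (u : ℂ) (i j : ℕ) : ℂ :=
  if i = j then 1
  else if i = 0 ∧ j = 1 then -((k : ℂ) - 1) * u
  else if i % 2 = 1 ∧ j + 1 = i then -((q : ℂ) - 1) * u
  else if i % 2 = 1 ∧ j = i + 2 then -((q : ℂ) - 1) * u + -u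
  else if i % 2 = 0 ∧ 2 ≤ i ∧ j + 2 = i then -u
  else 0

/-- The determinants of the `2n × 2n` upper-left truncations of `I - uT`
converge to `(1 - (qk - k + 1)u²)/(1 - qu²)` when `|u| < 1/√q`. -/
noncomputable def oneRayMod (q k : ℕ) (u β : ℂ) (n : ℕ) :
    Matrix (Fin (2 * n + 2)) (Fin (2 * n + 2)) ℂ :=
  Matrix.of fun i j =>
    if (i : ℕ) = 2 * n + 1 ∧ (j : ℕ) = 2 * n then β else oneRayEntry q k u i j

noncomputable def rayA (q k : ℕ) (u : ℂ) (n : ℕ) : Matrix (Fin (2 * n + 2)) (Fin (2 * n + 2)) ℂ :=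
  Matrix.of fun i j => oneRayEntry q k u i j

noncomputable def rayB (q : ℕ) (u : ℂ) (n : ℕ) : Matrix (Fin (2 * n + 2)) (Fin 2) ℂ :=
  Matrix.of fun i s =>
    if (i : ℕ) = 2 * n + 1 ∧ (s : ℕ) = 1 then -((q : ℂ) - 1) * u + -u else 0

noncomputable def rayC (u : ℂ) (n : ℕ) : Matrix (Fin 2) (Fin (2 * n + 2)) ℂ :=
  Matrix.of fun t j => if (t : ℕ) = 0 ∧ (j : ℕ) = 2 * n then -u else 0

noncomputable def rayD (β : ℂ) : Matrix (Fin 2) (Fin 2) ℂ :=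
  Matrix.of fun t s =>
    if (t : ℕ) = (s : ℕ) then 1 else if (t : ℕ) = 1 ∧ (s : ℕ) = 0 then β else 0

lemma hsub_lem (q k : ℕ) (u β : ℂ) (n : ℕ) :
    (oneRayMod q k u β (n + 1)).submatrix finSumFinEquiv finSumFinEquiv
      = Matrix.fromBlocks (rayA q k u n) (rayB q u n) (rayC u n) (rayD β) := by
  ext i j
  cases i with
  | inl i =>
    cases j with
    | inl j =>
      have hi := i.isLt; have hj := j.isLt
      simp only [Matrix.submatrix_apply, finSumFinEquiv_apply_left,
        Matrix.fromBlocks_apply₁₁, rayA, oneRayMod, Matrix.of_apply, Fin.coe_castAdd]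
      rw [if_neg (by omega)]
    | inr s =>
      have hi := i.isLt; have hs := s.isLt
      simp only [Matrix.submatrix_apply, finSumFinEquiv_apply_left,
        finSumFinEquiv_apply_right, Matrix.fromBlocks_apply₁₂, rayB, oneRayMod,
        Matrix.of_apply, Fin.coe_castAdd, Fin.coe_natAdd]
      rw [if_neg (by omega)]
      unfold oneRayEntry
      split_ifs <;> first | rfl | omega
  | inr t =>
    cases j with
    | inl j =>
      have ht := t.isLt; have hj := j.isLt
      simp only [Matrix.submatrix_apply, finSumFinEquiv_apply_left,
        finSumFinEquiv_apply_right, Matrix.fromBlocks_apply₂₁, rayC, oneRayMod,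
        Matrix.of_apply, Fin.coe_castAdd, Fin.coe_natAdd]
      rw [if_neg (by omega)]
      unfold oneRayEntry
      split_ifs <;> first | rfl | omega
    | inr s =>
      have ht := t.isLt; have hs := s.isLt
      simp only [Matrix.submatrix_apply, finSumFinEquiv_apply_right,
        Matrix.fromBlocks_apply₂₂, rayD, oneRayMod, Matrix.of_apply, Fin.coe_natAdd]
      unfold oneRayEntry
      split_ifs <;> first | rfl | omega
noncomputable def rayE (β : ℂ) : Matrix (Fin 2) (Fin 2) ℂ :=
  Matrix.of fun t s =>
    if (t : ℕ) = (s : ℕ) then 1 else if (t : ℕ) = 1 ∧ (s : ℕ) = 0 then -β else 0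

lemma rayD_mul_rayE (β : ℂ) : rayD β * rayE β = 1 := by
  ext i j
  fin_cases i <;> fin_cases j <;>
    simp [rayD, rayE, Matrix.mul_apply, Fin.sum_univ_two, Matrix.one_apply]

lemma rayE_mul_rayD (β : ℂ) : rayE β * rayD β = 1 := by
  ext i j
  fin_cases i <;> fin_cases j <;>
    simp [rayD, rayE, Matrix.mul_apply, Fin.sum_univ_two, Matrix.one_apply]

lemma rayD_det (β : ℂ) : (rayD β).det = 1 := by
  rw [Matrix.det_fin_two]
  simp [rayD]

lemma oneRayEntry_sub (q k : ℕ) (u : ℂ) (m : ℕ) :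
    oneRayEntry q k u (2 * m + 1) (2 * m) = -((q : ℂ) - 1) * u := by
  unfold oneRayEntry
  split_ifs <;> first | rfl | omega

lemma schur_lem (q k : ℕ) (u β : ℂ) (n : ℕ) :
    rayA q k u n - rayB q u n * rayE β * rayC u n
      = oneRayMod q k u (-((q : ℂ) - 1) * u + (q : ℂ) * u ^ 2 * β) n := by
  have hne : (2 * n + 1 : ℕ) ≠ 2 * n := by omega
  ext i j
  simp only [Matrix.sub_apply, Matrix.mul_apply, Fin.sum_univ_two, rayA, rayB, rayC, rayE,
    oneRayMod, Matrix.of_apply, Fin.val_zero, Fin.val_one]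
  by_cases h1 : (i : ℕ) = 2 * n + 1 <;> by_cases h2 : (j : ℕ) = 2 * n <;>
    simp [h1, h2, hne]
  rw [oneRayEntry_sub]
  ring

lemma oneRayMod_succ_det (q k : ℕ) (u β : ℂ) (n : ℕ) :
    (oneRayMod q k u β (n + 1)).det
      = (oneRayMod q k u (-((q : ℂ) - 1) * u + (q : ℂ) * u ^ 2 * β) n).det := by
  haveI : Invertible (rayD β) := ⟨rayE β, rayE_mul_rayD β, rayD_mul_rayE β⟩
  have hinv : ⅟(rayD β) = rayE β := invOf_eq_right_inv (rayD_mul_rayE β)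
  have h1 : (oneRayMod q k u β (n + 1)).det
      = (Matrix.fromBlocks (rayA q k u n) (rayB q u n) (rayC u n) (rayD β)).det := by
    rw [← Matrix.det_submatrix_equiv_self finSumFinEquiv, hsub_lem]
  rw [h1, Matrix.det_fromBlocks₂₂, hinv, rayD_det, one_mul, schur_lem]
lemma oneRayMod_det (q k : ℕ) (u : ℂ) : ∀ (n : ℕ) (β : ℂ),
    (oneRayMod q k u β n).det
      = 1 - (-((k : ℂ) - 1) * u) *
          ((-((q : ℂ) - 1) * u) * (∑ j ∈ Finset.range n, ((q : ℂ) * u ^ 2) ^ j)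
            + ((q : ℂ) * u ^ 2) ^ n * β)
  | 0, β => by
    rw [show (oneRayMod q k u β 0).det
        = oneRayMod q k u β 0 0 0 * oneRayMod q k u β 0 1 1
          - oneRayMod q k u β 0 0 1 * oneRayMod q k u β 0 1 0 from Matrix.det_fin_two _]
    simp only [oneRayMod, Matrix.of_apply, Fin.val_zero, Fin.val_one]
    norm_num [oneRayEntry]
  | n + 1, β => by
    rw [oneRayMod_succ_det, oneRayMod_det q k u n, Finset.sum_range_succ]
    ring

theorem truncated_det_limit (q k : ℕ) (hq : 2 ≤ q) (hk : 1 ≤ k) (u : ℂ)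
    (hu : ‖u‖ < 1 / Real.sqrt q) :
    Filter.Tendsto
      (fun n : ℕ =>
        Matrix.det (Matrix.of fun i j : Fin (2 * n) => oneRayEntry q k u i j))
      Filter.atTop
      (nhds ((1 - ((q : ℂ) * k - k + 1) * u ^ 2) / (1 - (q : ℂ) * u ^ 2))) := by
  have hq0 : (0 : ℝ) < q := by
    have : (0 : ℕ) < q := by omega
    exact_mod_cast this
  have hr : ‖(q : ℂ) * u ^ 2‖ < 1 := by
    rw [norm_mul, norm_pow, Complex.norm_natCast]
    have h2 : ‖u‖ ^ 2 < 1 / q := by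
      have hlt : ‖u‖ ^ 2 < (1 / Real.sqrt q) ^ 2 :=
        pow_lt_pow_left₀ hu (norm_nonneg u) two_ne_zero
      rwa [div_pow, one_pow, Real.sq_sqrt hq0.le] at hlt
    calc (q : ℝ) * ‖u‖ ^ 2 < q * (1 / q) := by
          exact mul_lt_mul_of_pos_left h2 hq0
      _ = 1 := by field_simp
  have hf : ∀ n : ℕ,
      Matrix.det (Matrix.of fun i j : Fin (2 * n) => oneRayEntry q k u i j)
        = 1 - ((-((k : ℂ) - 1) * u) * (-((q : ℂ) - 1) * u)) *
            ∑ j ∈ Finset.range n, ((q : ℂ) * u ^ 2) ^ j := by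
    intro n
    cases n with
    | zero =>
      haveI : IsEmpty (Fin (2 * 0)) := inferInstanceAs (IsEmpty (Fin 0))
      simp
    | succ m =>
      have hm : (Matrix.of fun i j : Fin (2 * (m + 1)) => oneRayEntry q k u i j)
          = oneRayMod q k u (-((q : ℂ) - 1) * u) m := by
        ext i j
        simp only [oneRayMod, Matrix.of_apply]
        split_ifs with h
        · rw [h.1, h.2]; exact oneRayEntry_sub q k u m
        · rfl
      rw [hm, oneRayMod_det, Finset.sum_range_succ]
      ring
  have hfun : (fun n : ℕ =>
        Matrix.det (Matrix.of fun i j : Fin (2 * n) => oneRayEntry q k u i j))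
      = fun n : ℕ => 1 - ((-((k : ℂ) - 1) * u) * (-((q : ℂ) - 1) * u)) *
            ∑ j ∈ Finset.range n, ((q : ℂ) * u ^ 2) ^ j := funext hf
  rw [hfun]
  have hgeom := (hasSum_geometric_of_norm_lt_one hr).tendsto_sum_nat
  have hlim := Filter.Tendsto.const_sub (1 : ℂ)
    (hgeom.const_mul ((-((k : ℂ) - 1) * u) * (-((q : ℂ) - 1) * u)))
  have h1r : (1 : ℂ) - (q : ℂ) * u ^ 2 ≠ 0 := by
    intro h
    have h1 : (1 : ℂ) = (q : ℂ) * u ^ 2 := by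
      have := sub_eq_zero.mp h; linear_combination this
    rw [← h1] at hr
    simp at hr
  have hval : (1 - ((q : ℂ) * k - k + 1) * u ^ 2) / (1 - (q : ℂ) * u ^ 2)
      = 1 - ((-((k : ℂ) - 1) * u) * (-((q : ℂ) - 1) * u)) * (1 - (q : ℂ) * u ^ 2)⁻¹ := by
    field_simp
    ring
  rw [hval]
  exact hlim
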